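/- arXiv:1211.3899 — 2 statements merged into one kernel-verified Lean document; each statement's English description precedes it below -/
import Mathlib

section
/- Let A be an n×n real matrix with ‖AᵀA − I‖ = γ ∈ (0,1) in the operator norm. Then there exists an orthogonal n×n matrix B such that ‖AB − I‖ ≤ γ. -/
open Matrix
noncomputable section

/-- Operator (ℓ²→ℓ²) norm of a square real matrix. -/
def opNorm {n : ℕ} (M : Matrix (Fin n) (Fin n) ℝ) : ℝ :=
  ‖(Matrix.toEuclideanCLM (𝕜 := ℝ) (n := Fin n) M :
      EuclideanSpace ℝ (Fin n) →L[ℝ] EuclideanSpace ℝ (Fin n))‖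

section AuxLemmas

open scoped Matrix.Norms.L2Operator

variable {n : ℕ}

lemma aux_opNorm_eq (M : Matrix (Fin n) (Fin n) ℝ) : opNorm M = ‖M‖ := rfl

lemma aux_norm_one_le : ‖(1 : Matrix (Fin n) (Fin n) ℝ)‖ ≤ 1 := by
  rw [Matrix.cstar_norm_def]
  rw [map_one (Matrix.toEuclideanCLM (𝕜 := ℝ) (n := Fin n))]
  exact ContinuousLinearMap.norm_id_le

lemma aux_unit_norm_le {U : Matrix (Fin n) (Fin n) ℝ} (h : star U * U = 1) : ‖U‖ ≤ 1 := by
  have h1 : ‖U‖ * ‖U‖ = ‖Uᴴ * U‖ := (Matrix.l2_opNorm_conjTranspose_mul_self U).symm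
  rw [← Matrix.star_eq_conjTranspose, h] at h1
  have h2 : ‖U‖ * ‖U‖ ≤ 1 := h1.le.trans aux_norm_one_le
  nlinarith [norm_nonneg U]

lemma aux_norm_diag_le {d : Fin n → ℝ} {c : ℝ} (hc : 0 ≤ c) (h : ∀ i, |d i| ≤ c) :
    ‖Matrix.diagonal d‖ ≤ c := by
  rw [Matrix.l2_opNorm_def]
  apply ContinuousLinearMap.opNorm_le_bound _ hc
  intro x
  rw [LinearEquiv.trans_apply, LinearMap.coe_toContinuousLinearMap', Matrix.toEuclideanLin_apply]
  rw [EuclideanSpace.norm_eq, EuclideanSpace.norm_eq]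
  rw [← Real.sqrt_sq hc, ← Real.sqrt_mul (by positivity)]
  apply Real.sqrt_le_sqrt
  rw [Finset.mul_sum]
  apply Finset.sum_le_sum
  intro i _
  simp only [PiLp.toLp_apply, Matrix.mulVec_diagonal]
  have h1 := h i
  have hx : (0:ℝ) ≤ ‖x i‖ := norm_nonneg _
  have h2 : ‖d i * x i‖ ≤ c * ‖x i‖ := by
    rw [norm_mul, Real.norm_eq_abs (d i)]
    exact mul_le_mul_of_nonneg_right (h i) hx
  nlinarith [norm_nonneg (d i * x i)]

lemma aux_eig_bound {M : Matrix (Fin n) (Fin n) ℝ} (hM : M.IsHermitian) (i : Fin n) :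
    |hM.eigenvalues i - 1| ≤ ‖M - 1‖ := by
  set v := hM.eigenvectorBasis i with hv
  have hv1 : ‖v‖ = 1 := hM.eigenvectorBasis.orthonormal.1 i
  have key := Matrix.l2_opNorm_mulVec (M - 1) v
  have hmv : (EuclideanSpace.equiv (Fin n) ℝ).symm ((M - 1) *ᵥ (v : Fin n → ℝ))
      = (hM.eigenvalues i - 1) • v := by
    have h2 : (M - 1) *ᵥ (v : Fin n → ℝ) = (hM.eigenvalues i - 1) • (v : Fin n → ℝ) := by
      rw [Matrix.sub_mulVec, Matrix.one_mulVec, sub_smul, one_smul]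
      exact congrArg (· - (v : Fin n → ℝ)) (hM.mulVec_eigenvectorBasis i)
    rw [h2]
    rfl
  rw [hmv, norm_smul, hv1, Real.norm_eq_abs, mul_one, mul_one] at key
  exact key

/-- Main statement phrased with the scoped L2 operator norm. -/
lemma aux_main (A : Matrix (Fin n) (Fin n) ℝ) (γ : ℝ) (hγ0 : 0 < γ) (hγ1 : γ < 1)
    (hA : ‖Aᵀ * A - 1‖ = γ) :
    ∃ B : Matrix (Fin n) (Fin n) ℝ, B ∈ Matrix.orthogonalGroup (Fin n) ℝ ∧
      ‖A * B - 1‖ ≤ γ := by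
  have hH : (Aᵀ * A).IsHermitian := Matrix.isHermitian_conjTranspose_mul_self A
  set lam := hH.eigenvalues with hlam
  have heig : ∀ i, |lam i - 1| ≤ γ := fun i => hA ▸ aux_eig_bound hH i
  have hlam_pos : ∀ i, 0 < lam i := by
    intro i
    have h1 := heig i
    rw [abs_le] at h1
    linarith [h1.1]
  set d : Fin n → ℝ := fun i => Real.sqrt (lam i) with hd
  have hd_pos : ∀ i, 0 < d i := fun i => Real.sqrt_pos.2 (hlam_pos i)
  have hd_sq : ∀ i, d i * d i = lam i := fun i => Real.mul_self_sqrt (hlam_pos i).le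
  have hd1 : ∀ i, |d i - 1| ≤ γ := by
    intro i
    have h1 : |d i - 1| * (d i + 1) = |lam i - 1| := by
      rw [← abs_of_nonneg (by linarith [hd_pos i] : (0:ℝ) ≤ d i + 1), ← abs_mul]
      congr 1
      nlinarith [hd_sq i]
    nlinarith [abs_nonneg (d i - 1), hd_pos i, heig i]
  set V : Matrix (Fin n) (Fin n) ℝ := (hH.eigenvectorUnitary : Matrix (Fin n) (Fin n) ℝ)
    with hVdef
  have hV := hH.eigenvectorUnitary.2
  rw [Unitary.mem_iff] at hV
  obtain ⟨hV1, hV2⟩ := hV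
  set S : Matrix (Fin n) (Fin n) ℝ := V * diagonal d * star V with hSdef
  have hofr : (RCLike.ofReal ∘ lam : Fin n → ℝ) = lam := rfl
  have hspec : Aᵀ * A = V * diagonal lam * star V := by
    have := hH.spectral_theorem
    rwa [hofr] at this
  have hdd : diagonal (fun i => d i * d i) = diagonal lam := by
    exact congrArg diagonal (funext hd_sq)
  have hSS : S * S = Aᵀ * A := by
    calc S * S = V * diagonal d * ((star V * V) * (diagonal d * star V)) := by
          simp only [hSdef, Matrix.mul_assoc]
      _ = V * (diagonal d * diagonal d * star V) := by
          rw [hV1, one_mul, Matrix.mul_assoc, Matrix.mul_assoc]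
      _ = V * diagonal lam * star V := by
          rw [diagonal_mul_diagonal, hdd, Matrix.mul_assoc]
      _ = Aᵀ * A := hspec.symm
  have hSstar : star S = S := by
    rw [hSdef, Matrix.star_mul, Matrix.star_mul, star_star]
    have h : star (diagonal d) = diagonal d := by
      simp [Matrix.star_eq_conjTranspose, Matrix.diagonal_conjTranspose]
    rw [h, Matrix.mul_assoc]
  have hdetH : (Aᵀ * A).det = ∏ i, lam i := hH.det_eq_prod_eigenvalues
  have hprod_pos : 0 < ∏ i, lam i := Finset.prod_pos fun i _ => hlam_pos i
  have hdetA : IsUnit A.det := by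
    have h1 : A.det * A.det = ∏ i, lam i := by
      rw [← hdetH, Matrix.det_mul, Matrix.det_transpose]
    refine isUnit_iff_ne_zero.2 fun h => ?_
    rw [h, mul_zero] at h1
    exact absurd h1.symm (ne_of_gt hprod_pos)
  have hdetAT : IsUnit Aᵀ.det := by rwa [Matrix.det_transpose]
  have hdetS : IsUnit S.det := by
    have h1 : S.det * S.det = ∏ i, lam i := by
      have h2 := congrArg Matrix.det hSS
      rw [Matrix.det_mul] at h2
      rw [h2, hdetH]
    refine isUnit_iff_ne_zero.2 fun h => ?_
    rw [h, mul_zero] at h1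
    exact absurd h1.symm (ne_of_gt hprod_pos)
  have hSinv1 : S * S⁻¹ = 1 := Matrix.mul_nonsing_inv S hdetS
  have hSinv2 : S⁻¹ * S = 1 := Matrix.nonsing_inv_mul S hdetS
  have hSinvStar : star S⁻¹ = S⁻¹ := by
    rw [Matrix.star_eq_conjTranspose, Matrix.conjTranspose_nonsing_inv,
      ← Matrix.star_eq_conjTranspose, hSstar]
  set U : Matrix (Fin n) (Fin n) ℝ := A * S⁻¹ with hUdef
  set B : Matrix (Fin n) (Fin n) ℝ := S⁻¹ * Aᵀ with hBdef
  have hstarA : star A = Aᵀ := by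
    rw [Matrix.star_eq_conjTranspose, Matrix.conjTranspose_eq_transpose_of_trivial]
  have hsU : star U = B := by
    rw [hUdef, Matrix.star_mul, hSinvStar, hstarA, hBdef]
  have hstarB : star B = U := by rw [← hsU, star_star]
  have hX : S⁻¹ * S⁻¹ = A⁻¹ * Aᵀ⁻¹ := by
    have h1 : S⁻¹ * S⁻¹ = (S * S)⁻¹ := (Matrix.mul_inv_rev S S).symm
    rw [h1, hSS, Matrix.mul_inv_rev]
  have hUB : U * B = 1 := by
    calc U * B = A * (S⁻¹ * S⁻¹) * Aᵀ := by simp only [hUdef, hBdef, Matrix.mul_assoc]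
      _ = A * (A⁻¹ * Aᵀ⁻¹) * Aᵀ := by rw [hX]
      _ = 1 := by
          rw [← Matrix.mul_assoc, Matrix.mul_nonsing_inv A hdetA, one_mul,
            Matrix.nonsing_inv_mul Aᵀ hdetAT]
  have hBU : B * U = 1 := by
    calc B * U = S⁻¹ * (Aᵀ * A) * S⁻¹ := by simp only [hUdef, hBdef, Matrix.mul_assoc]
      _ = S⁻¹ * (S * S) * S⁻¹ := by rw [hSS]
      _ = 1 := by rw [← Matrix.mul_assoc, ← Matrix.mul_assoc, hSinv2, one_mul, hSinv1]
  have hUS : U * S = A := by rw [hUdef, Matrix.mul_assoc, hSinv2, Matrix.mul_one]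
  have hABeq : A * B - 1 = U * (S - 1) * B := by
    have h1 : U * (S - 1) * B = U * S * B - U * B := by
      rw [mul_sub, mul_one, sub_mul]
    rw [h1, hUS, hUB]
  refine ⟨B, ?_, ?_⟩
  · rw [Matrix.mem_orthogonalGroup_iff]
    rw [← Matrix.conjTranspose_eq_transpose_of_trivial, ← Matrix.star_eq_conjTranspose, hstarB]
    exact hBU
  · rw [hABeq]
    have hS1eq : S - 1 = V * diagonal (fun i => d i - 1) * star V := by
      have h0 : diagonal (fun i => d i - 1) = diagonal d - 1 := by
        rw [← Matrix.diagonal_one, Matrix.diagonal_sub]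
      rw [h0, mul_sub, mul_one, sub_mul, hV2, hSdef]
    have hnV : ‖V‖ ≤ 1 := aux_unit_norm_le hV1
    have hnVs : ‖star V‖ ≤ 1 := aux_unit_norm_le (by rw [star_star]; exact hV2)
    have hnD : ‖diagonal (fun i => d i - 1)‖ ≤ γ := aux_norm_diag_le hγ0.le hd1
    have hS1 : ‖S - 1‖ ≤ γ := by
      rw [hS1eq]
      have e1 : ‖V * diagonal (fun i => d i - 1) * star V‖
          ≤ ‖V * diagonal (fun i => d i - 1)‖ * ‖star V‖ := Matrix.l2_opNorm_mul _ _
      have e2 : ‖V * diagonal (fun i => d i - 1)‖ ≤ ‖V‖ * ‖diagonal (fun i => d i - 1)‖ :=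
        Matrix.l2_opNorm_mul _ _
      have n1 : (0:ℝ) ≤ ‖V * diagonal (fun i => d i - 1)‖ := norm_nonneg _
      have n2 : (0:ℝ) ≤ ‖star V‖ := norm_nonneg _
      have n3 : (0:ℝ) ≤ ‖V‖ := norm_nonneg _
      have n4 : (0:ℝ) ≤ ‖diagonal (fun i => d i - 1)‖ := norm_nonneg _
      nlinarith
    have hnU : ‖U‖ ≤ 1 := aux_unit_norm_le (by rw [hsU]; exact hBU)
    have hnB : ‖B‖ ≤ 1 := aux_unit_norm_le (by rw [hstarB]; exact hUB)
    have e1 : ‖U * (S - 1) * B‖ ≤ ‖U * (S - 1)‖ * ‖B‖ := Matrix.l2_opNorm_mul _ _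
    have e2 : ‖U * (S - 1)‖ ≤ ‖U‖ * ‖S - 1‖ := Matrix.l2_opNorm_mul _ _
    have n1 : (0:ℝ) ≤ ‖U * (S - 1)‖ := norm_nonneg _
    have n2 : (0:ℝ) ≤ ‖B‖ := norm_nonneg _
    have n3 : (0:ℝ) ≤ ‖U‖ := norm_nonneg _
    have n4 : (0:ℝ) ≤ ‖S - 1‖ := norm_nonneg _
    nlinarith

end AuxLemmas

/-- If an `n×n` real matrix `A` satisfies `‖AᵀA − I‖ = γ ∈ (0,1)` in the
operator norm, then there is an orthogonal matrix `B` with `‖AB − I‖ ≤ γ`. -/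
theorem almost_unitary_matrix
    {n : ℕ} (A : Matrix (Fin n) (Fin n) ℝ) (γ : ℝ) (hγ : γ ∈ Set.Ioo (0:ℝ) 1)
    (hA : opNorm (Aᵀ * A - 1) = γ) :
    ∃ B : Matrix (Fin n) (Fin n) ℝ, B ∈ Matrix.orthogonalGroup (Fin n) ℝ ∧
      opNorm (A * B - 1) ≤ γ := by
  obtain ⟨B, hB1, hB2⟩ := aux_main A γ hγ.1 hγ.2 hA
  exact ⟨B, hB1, hB2⟩
end
end

section
/- Let (v_p) be a family of vectors in a Hilbert space H satisfying |⟨v_p, v_q⟩ − δ_{pq}| ≤ ε for all p, q in a finite index set of size κ, with ε·κ < 1. Then the vectors v_p are linearly independent. -/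
noncomputable section

/-- Almost orthonormal vectors in a real inner product space are linearly
independent: if `|⟨v_p, v_q⟩ − δ_{pq}| ≤ ε` for `p, q = 1,…,κ` and `ε·κ < 1`, then the `v_p`
are linearly independent. -/
theorem almost_orthonormal_linearIndependent
    {H : Type*} [NormedAddCommGroup H] [InnerProductSpace ℝ H]
    {κ : ℕ} (v : Fin κ → H) (ε : ℝ) (hε : 0 ≤ ε) (hεκ : ε * κ < 1)
    (halmost : ∀ p q : Fin κ,
      |inner ℝ (v p) (v q) - (if p = q then (1:ℝ) else 0)| ≤ ε) :
    LinearIndependent ℝ v := by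
  rw [Fintype.linearIndependent_iff]
  intro g hg
  by_contra hne
  push_neg at hne
  obtain ⟨i0, hi0⟩ := hne
  obtain ⟨p, -, hp⟩ := Finset.exists_max_image Finset.univ (fun i => |g i|)
    ⟨i0, Finset.mem_univ i0⟩
  have hgp : 0 < |g p| := lt_of_lt_of_le (abs_pos.mpr hi0) (hp i0 (Finset.mem_univ i0))
  have h0 : ∑ q, g q * inner ℝ (v p) (v q) = (0:ℝ) := by
    have := congrArg (fun x => (inner ℝ (v p) x : ℝ)) hg
    simpa [inner_sum, real_inner_smul_right, mul_comm] using this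
  have key : g p = -∑ q, g q * (inner ℝ (v p) (v q) - (if p = q then (1:ℝ) else 0)) := by
    have : ∑ q, g q * (inner ℝ (v p) (v q) - (if p = q then (1:ℝ) else 0))
        = (∑ q, g q * inner ℝ (v p) (v q)) - ∑ q, g q * (if p = q then (1:ℝ) else 0) := by
      rw [← Finset.sum_sub_distrib]
      congr 1; ext q; ring
    rw [this, h0]
    simp [eq_comm]
  have hbound : |g p| ≤ ε * κ * |g p| := by
    calc |g p| = |∑ q, g q * (inner ℝ (v p) (v q) - (if p = q then (1:ℝ) else 0))| := by
          rw [key, abs_neg]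
      _ ≤ ∑ q, |g q * (inner ℝ (v p) (v q) - (if p = q then (1:ℝ) else 0))| :=
          Finset.abs_sum_le_sum_abs _ _
      _ ≤ ∑ _q : Fin κ, |g p| * ε := by
          apply Finset.sum_le_sum
          intro q _
          rw [abs_mul]
          exact mul_le_mul (hp q (Finset.mem_univ q)) (halmost p q) (abs_nonneg _)
            (abs_nonneg _)
      _ = ε * κ * |g p| := by
          simp [Finset.sum_const]; ring
  nlinarith
end
end
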